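/- Let A = k[[t^a, t^{a+1}]] with a ≥ 2, q = a−1, s = aℓ with 1 ≤ ℓ < q (i.e., the case r = 0). Then I = (t^s) : 𝔪^{a−1} equals 𝔪^ℓ, and the associated graded ring G(I) is Cohen–Macaulay. -/

import Mathlib

set_option maxHeartbeats 1000000
set_option synthInstance.maxHeartbeats 1000000

open PowerSeries

/-- The numerical semigroup ring `k[[H]]`: power series supported on `H`. -/
noncomputable def ssr (k : Type) [Field k] (H : AddSubmonoid ℕ) :
    Subalgebra k (PowerSeries k) where
  carrier := {f | ∀ n : ℕ, n ∉ H → PowerSeries.coeff (R := k) n f = 0}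
  mul_mem' := by
    intro f g hf hg n hn
    rw [Set.mem_setOf_eq] at hf hg
    rw [PowerSeries.coeff_mul]
    apply Finset.sum_eq_zero
    rintro ⟨i, j⟩ hij
    replace hij : i + j = n := by simpa using hij
    by_cases hi : i ∈ H
    · have hj : j ∉ H := fun hj => hn (hij ▸ H.add_mem hi hj)
      rw [hg j hj, mul_zero]
    · rw [hf i hi, zero_mul]
  add_mem' := by
    intro f g hf hg n hn
    rw [Set.mem_setOf_eq] at hf hg
    rw [map_add, hf n hn, hg n hn, add_zero]
  one_mem' := by
    intro n hn
    have h0 : n ≠ 0 := fun h => hn (by rw [h]; exact H.zero_mem)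
    simp [PowerSeries.coeff_one, h0]
  zero_mem' := by
    intro n _
    simp
  algebraMap_mem' := by
    intro r n hn
    have h0 : n ≠ 0 := fun h => hn (by rw [h]; exact H.zero_mem)
    simp [PowerSeries.algebraMap_apply, PowerSeries.coeff_C, h0]

/-- The monomial `t^n` as an element of `k[[H]]`, for `n ∈ H`. -/
noncomputable def tp (k : Type) [Field k] (H : AddSubmonoid ℕ) (n : ℕ) (hn : n ∈ H) :
    ssr k H :=
  ⟨PowerSeries.X ^ n, by
    intro m hm
    rw [PowerSeries.coeff_X_pow]
    exact if_neg (fun h => hm (by rw [h]; exact hn))⟩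

/-- The maximal ideal of `k[[H]]`, generated by the monomials `t^n`, `0 < n ∈ H`. -/
noncomputable def mIdeal (k : Type) [Field k] (H : AddSubmonoid ℕ) : Ideal (ssr k H) :=
  Ideal.span {x | ∃ n : ℕ, ∃ hn : n ∈ H, 0 < n ∧ x = tp k H n hn}

section Helpers

/-- Helper: compute `n / a` and `n % a` from a representation `n = a*q + r`, `r < a`. -/
lemma div_mod_pair {a q r n : ℕ} (ha : 0 < a) (hr : r < a) (hn : n = a * q + r) :
    n / a = q ∧ n % a = r := by
  subst hn
  constructor
  · rw [Nat.mul_add_div ha, Nat.div_eq_of_lt hr, add_zero]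
  · rw [Nat.mul_add_mod, Nat.mod_eq_of_lt hr]

/-- Characterization of membership in `⟨a, a+1⟩`. -/
lemma memH_iff {a : ℕ} (ha : 1 ≤ a) (n : ℕ) :
    n ∈ AddSubmonoid.closure ({a, a + 1} : Set ℕ) ↔ n % a ≤ n / a := by
  rw [AddSubmonoid.mem_closure_pair]
  constructor
  · rintro ⟨x, y, rfl⟩
    simp only [smul_eq_mul]
    have h4 : y % a < a := Nat.mod_lt _ (by omega)
    have h1 : x * a + y * (a + 1) = a * (x + y + y / a) + y % a := by
      have := Nat.div_add_mod y a
      ring_nf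
      omega
    have hp := div_mod_pair (show 0 < a by omega) h4 h1
    have h5 : y % a ≤ y := Nat.mod_le _ _
    rw [hp.1, hp.2]
    exact h5.trans ((Nat.le_add_left y x).trans (Nat.le_add_right (x + y) _))
  · intro h
    refine ⟨n / a - n % a, n % a, ?_⟩
    simp only [smul_eq_mul]
    obtain ⟨X, hX⟩ : ∃ X, n / a = n % a + X := ⟨n / a - n % a, by omega⟩
    have h0 := Nat.div_add_mod n a
    have hsub : n / a - n % a = X := by omega
    have hr : X * a + n % a * (a + 1) = a * (n % a + X) + n % a := by ring
    rw [hsub, hr, ← hX]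
    omega

variable (k : Type) [Field k] (a : ℕ) (H : AddSubmonoid ℕ)

lemma aec_mem (hH : H = AddSubmonoid.closure {a, a + 1}) (e c : ℕ) (hc : c ≤ e) :
    a * e + c ∈ H := by
  rw [hH, AddSubmonoid.mem_closure_pair]
  refine ⟨e - c, c, ?_⟩
  simp only [smul_eq_mul]
  obtain ⟨X, rfl⟩ : ∃ X, e = c + X := ⟨e - c, by omega⟩
  rw [Nat.add_sub_cancel_left]
  ring

lemma frobH (ha : 2 ≤ a) (hH : H = AddSubmonoid.closure {a, a + 1}) {m : ℕ}
    (hm : a * (a - 1) ≤ m) : m ∈ H := by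
  rw [hH, memH_iff (by omega)]
  have h1 : m % a < a := Nat.mod_lt _ (by omega)
  have h2 : a - 1 ≤ m / a := by
    rw [Nat.le_div_iff_mul_le (show 0 < a by omega)]
    calc (a - 1) * a = a * (a - 1) := by ring
    _ ≤ m := hm
  omega

lemma ssr_coeff_eq_zero (f : ssr k H) {n : ℕ} (hn : n ∉ H) :
    PowerSeries.coeff (R := k) n (f : PowerSeries k) = 0 := f.2 n hn

lemma tp_coe (n : ℕ) (hn : n ∈ H) :
    ((tp k H n hn : ssr k H) : PowerSeries k) = PowerSeries.X ^ n := rfl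

lemma tp_congr {m n : ℕ} (hm : m ∈ H) (hn : n ∈ H) (h : m = n) :
    tp k H m hm = tp k H n hn := by subst h; rfl

lemma tp_mul (m n : ℕ) (hm : m ∈ H) (hn : n ∈ H) :
    tp k H m hm * tp k H n hn = tp k H (m + n) (H.add_mem hm hn) :=
  Subtype.ext (by simp [tp, pow_add])

lemma tp_pow (n : ℕ) (hn : n ∈ H) (j : ℕ) :
    (tp k H n hn) ^ j = tp k H (j * n) (by simpa [smul_eq_mul] using H.nsmul_mem hn j) := by
  apply Subtype.ext
  rw [SubmonoidClass.coe_pow, tp_coe, tp_coe, ← pow_mul, mul_comm]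

lemma tp_mem_pow (hH : H = AddSubmonoid.closure {a, a + 1})
    (haH : a ∈ H) (ha1H : a + 1 ∈ H)
    (𝔪 : Ideal (ssr k H)) (h𝔪 : 𝔪 = Ideal.span {tp k H a haH, tp k H (a + 1) ha1H})
    (e c : ℕ) (hc : c ≤ e) (hm : a * e + c ∈ H) :
    tp k H (a * e + c) hm ∈ 𝔪 ^ e := by
  have haM : tp k H a haH ∈ 𝔪 := by
    rw [h𝔪]; exact Ideal.subset_span (Set.mem_insert _ _)
  have ha1M : tp k H (a + 1) ha1H ∈ 𝔪 := by
    rw [h𝔪]; exact Ideal.subset_span (Set.mem_insert_of_mem _ rfl)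
  have h1 : tp k H (a * e + c) hm
      = (tp k H a haH) ^ (e - c) * (tp k H (a + 1) ha1H) ^ c := by
    rw [tp_pow, tp_pow, tp_mul]
    apply tp_congr
    obtain ⟨X, rfl⟩ : ∃ X, e = c + X := ⟨e - c, by omega⟩
    rw [Nat.add_sub_cancel_left]
    ring
  rw [h1]
  have h2 := Ideal.mul_mem_mul (Ideal.pow_mem_pow haM (e - c)) (Ideal.pow_mem_pow ha1M c)
  rwa [← pow_add, Nat.sub_add_cancel hc] at h2

/-- The ideal of elements of order at least `c`. -/
noncomputable def jdl (c : ℕ) : Ideal (ssr k H) where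
  carrier := {f | ∀ n < c, PowerSeries.coeff (R := k) n (f : PowerSeries k) = 0}
  add_mem' := by
    intro f g hf hg n hn
    rw [Set.mem_setOf_eq] at hf hg
    rw [AddMemClass.coe_add, map_add, hf n hn, hg n hn, add_zero]
  zero_mem' := by intro n hn; simp
  smul_mem' := by
    intro g f hf n hn
    rw [Set.mem_setOf_eq] at hf
    rw [smul_eq_mul, MulMemClass.coe_mul, PowerSeries.coeff_mul]
    apply Finset.sum_eq_zero
    rintro ⟨i, j⟩ hij
    replace hij : i + j = n := by simpa using hij
    rw [hf j (by omega), mul_zero]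

lemma mem_jdl {f : ssr k H} {c : ℕ} :
    f ∈ jdl k H c ↔ ∀ n < c, PowerSeries.coeff (R := k) n (f : PowerSeries k) = 0 := Iff.rfl

lemma jdl_mul_le (b c : ℕ) : jdl k H b * jdl k H c ≤ jdl k H (b + c) := by
  rw [Ideal.mul_le]
  intro f hf g hg
  rw [mem_jdl] at hf hg ⊢
  intro n hn
  rw [MulMemClass.coe_mul, PowerSeries.coeff_mul]
  apply Finset.sum_eq_zero
  rintro ⟨i, j⟩ hij
  replace hij : i + j = n := by simpa using hij
  by_cases hi : i < b
  · rw [hf i hi, zero_mul]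
  · rw [hg j (by omega), mul_zero]

lemma pow_m_le (haH : a ∈ H) (ha1H : a + 1 ∈ H)
    (𝔪 : Ideal (ssr k H)) (h𝔪 : 𝔪 = Ideal.span {tp k H a haH, tp k H (a + 1) ha1H})
    (e : ℕ) : 𝔪 ^ e ≤ jdl k H (a * e) := by
  induction e with
  | zero => intro f _; rw [mem_jdl]; omega
  | succ e ih =>
      have h1 : 𝔪 ^ (e + 1) = 𝔪 ^ e * 𝔪 := pow_succ 𝔪 e
      have h𝔪le : 𝔪 ≤ jdl k H a := by
        rw [h𝔪, Ideal.span_le]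
        rintro x (rfl | rfl) <;>
        · intro n hn
          show PowerSeries.coeff (R := k) n (PowerSeries.X ^ _) = 0
          rw [PowerSeries.coeff_X_pow, if_neg (by omega)]
      have h2 : 𝔪 ^ e * 𝔪 ≤ jdl k H (a * e) * jdl k H a := Ideal.mul_mono ih h𝔪le
      have h3 := (jdl_mul_le k H (a * e) a)
      have h4 : a * e + a = a * (e + 1) := by ring
      rw [h1]
      exact le_trans h2 (h4 ▸ h3)

/-- Auxiliary series used to decompose an element of order `≥ a*e` as a combination of
monomials `t^(a*e+c)`, `0 ≤ c ≤ e`. -/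
noncomputable def gaux (k : Type) [Field k] (f : PowerSeries k) (a e c : ℕ) : PowerSeries k :=
  PowerSeries.mk fun m =>
    if min ((m + (a * e + c)) % a) e = c then PowerSeries.coeff (R := k) (m + (a * e + c)) f else 0

lemma coeff_X_pow_mul_gaux (k : Type) [Field k] (f : PowerSeries k) (a e c N : ℕ) :
    PowerSeries.coeff (R := k) N ((PowerSeries.X : PowerSeries k) ^ (a * e + c) * gaux k f a e c)
      = if a * e + c ≤ N ∧ min (N % a) e = c then PowerSeries.coeff (R := k) N f else 0 := by
  rw [PowerSeries.coeff_X_pow_mul']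
  by_cases hle : a * e + c ≤ N
  · rw [if_pos hle, gaux, PowerSeries.coeff_mk]
    have hNE : N - (a * e + c) + (a * e + c) = N := by omega
    rw [hNE]
    by_cases h2 : min (N % a) e = c
    · rw [if_pos h2, if_pos ⟨hle, h2⟩]
    · rw [if_neg h2, if_neg (by tauto)]
  · rw [if_neg hle, if_neg (by tauto)]

lemma gaux_mem (k : Type) [Field k] (a : ℕ) (ha : 2 ≤ a) (H : AddSubmonoid ℕ)
    (hH : H = AddSubmonoid.closure {a, a + 1}) (f : ssr k H) (e c : ℕ) :
    gaux k (f : PowerSeries k) a e c ∈ ssr k H := by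
  intro m hm
  rw [gaux, PowerSeries.coeff_mk]
  split_ifs with hcond
  · set n := m + (a * e + c) with hn
    by_cases hnH : n ∈ H
    · exfalso
      apply hm
      have hra : n % a < a := Nat.mod_lt _ (by omega)
      have hrq : n % a ≤ n / a := (memH_iff (by omega) n).1 (hH ▸ hnH)
      have hqe : e ≤ n / a := by
        rw [Nat.le_div_iff_mul_le (show 0 < a by omega)]
        calc e * a = a * e := by ring
        _ ≤ n := by omega
      obtain ⟨Q, hQ⟩ : ∃ Q, n / a = e + Q := ⟨n / a - e, by omega⟩
      have hdm := Nat.div_add_mod n a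
      rw [hQ] at hdm
      have hexp : a * (e + Q) = a * e + a * Q := by ring
      rw [hH, memH_iff (show 1 ≤ a by omega)]
      by_cases hre : n % a ≤ e
      · -- c = n % a, m = a * Q
        have hc : c = n % a := by omega
        have hmeq : m = a * Q := by omega
        have hmeq' : m = a * Q + 0 := by omega
        have hp := div_mod_pair (show 0 < a by omega) (show 0 < a by omega) hmeq'
        omega
      · -- c = e, m = a * Q + (n % a - e)
        have hc : c = e := by omega
        have hmeq : m = a * Q + (n % a - e) := by omega
        have hp := div_mod_pair (show 0 < a by omega) (show n % a - e < a by omega) hmeq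
        omega
    · exact f.2 n hnH
  · rfl

lemma Xpow_mul_gaux_mem (k : Type) [Field k] (a : ℕ) (ha : 2 ≤ a) (H : AddSubmonoid ℕ)
    (hH : H = AddSubmonoid.closure {a, a + 1}) (f : ssr k H) (e c : ℕ) :
    (PowerSeries.X : PowerSeries k) ^ (a * e + c) * gaux k (f : PowerSeries k) a e c
      ∈ ssr k H := by
  by_cases hc : c ≤ e
  · exact (ssr k H).mul_mem (tp k H (a * e + c) (aec_mem a H hH e c hc)).2
      (gaux_mem k a ha H hH f e c)
  · have hz : gaux k (f : PowerSeries k) a e c = 0 := by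
      ext m
      rw [gaux, PowerSeries.coeff_mk, if_neg (by
        intro hcon
        have : min ((m + (a * e + c)) % a) e ≤ e := min_le_right _ _
        omega), map_zero]
    rw [hz, mul_zero]
    exact (ssr k H).zero_mem

lemma jdl_le_pow (k : Type) [Field k] (a : ℕ) (ha : 2 ≤ a) (H : AddSubmonoid ℕ)
    (hH : H = AddSubmonoid.closure {a, a + 1})
    (haH : a ∈ H) (ha1H : a + 1 ∈ H)
    (𝔪 : Ideal (ssr k H)) (h𝔪 : 𝔪 = Ideal.span {tp k H a haH, tp k H (a + 1) ha1H})
    (e : ℕ) : jdl k H (a * e) ≤ 𝔪 ^ e := by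
  intro f hf
  rw [mem_jdl] at hf
  have key : (f : PowerSeries k) = ∑ c ∈ Finset.range (e + 1),
      (PowerSeries.X : PowerSeries k) ^ (a * e + c) * gaux k (f : PowerSeries k) a e c := by
    ext N
    rw [map_sum]
    have hterm : ∀ c, PowerSeries.coeff (R := k) N
        ((PowerSeries.X : PowerSeries k) ^ (a * e + c) * gaux k (f : PowerSeries k) a e c)
        = if a * e + c ≤ N ∧ min (N % a) e = c then PowerSeries.coeff (R := k) N (f : PowerSeries k)
          else 0 := fun c => coeff_X_pow_mul_gaux k _ a e c N
    by_cases hN : N < a * e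
    · rw [hf N hN]
      symm
      apply Finset.sum_eq_zero
      intro c _
      rw [hterm c, if_neg (by omega)]
    · have hNa : e ≤ N / a := by
        rw [Nat.le_div_iff_mul_le (show 0 < a by omega)]
        calc e * a = a * e := by ring
        _ ≤ N := by omega
      have hdm := Nat.div_add_mod N a
      have h6 : a * e ≤ a * (N / a) := Nat.mul_le_mul_left a hNa
      set c₀ := min (N % a) e with hc₀
      have hc0le : a * e + c₀ ≤ N := by
        have : c₀ ≤ N % a := min_le_left _ _
        omega
      rw [Finset.sum_eq_single_of_mem c₀ (Finset.mem_range.2 (by omega))]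
      · rw [hterm c₀, if_pos ⟨hc0le, rfl⟩]
      · intro b _ hb
        rw [hterm b, if_neg (by tauto)]
  have hfe : f = ∑ c ∈ Finset.range (e + 1),
      (⟨_, Xpow_mul_gaux_mem k a ha H hH f e c⟩ : ssr k H) := by
    apply Subtype.ext
    rw [AddSubmonoidClass.coe_finset_sum]
    exact key
  rw [hfe]
  apply Ideal.sum_mem
  intro c hc
  rw [Finset.mem_range] at hc
  have hcc : c ≤ e := by omega
  have heq : (⟨_, Xpow_mul_gaux_mem k a ha H hH f e c⟩ : ssr k H)
      = tp k H (a * e + c) (aec_mem a H hH e c hcc)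
        * ⟨gaux k (f : PowerSeries k) a e c, gaux_mem k a ha H hH f e c⟩ := rfl
  rw [heq]
  exact Ideal.mul_mem_right _ _ (tp_mem_pow k a H hH haH ha1H 𝔪 h𝔪 e c hcc _)

lemma jdl_le_Q (k : Type) [Field k] (a : ℕ) (ha : 2 ≤ a) (H : AddSubmonoid ℕ)
    (hH : H = AddSubmonoid.closure {a, a + 1}) (ℓ : ℕ) (hsmem : a * ℓ ∈ H)
    (Q : Ideal (ssr k H)) (hQ : Q = Ideal.span {tp k H (a * ℓ) hsmem}) :
    jdl k H (a * ℓ + a * (a - 1)) ≤ Q := by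
  intro f hf
  rw [mem_jdl] at hf
  rw [hQ, Ideal.mem_span_singleton]
  have hgmem : (PowerSeries.mk fun m =>
      PowerSeries.coeff (R := k) (m + a * ℓ) (f : PowerSeries k)) ∈ ssr k H := by
    intro m hm
    rw [PowerSeries.coeff_mk]
    by_cases h1 : m + a * ℓ ∈ H
    · have h2 : ¬ a * (a - 1) ≤ m := fun h => hm (frobH a H ha hH h)
      exact hf _ (by omega)
    · exact f.2 _ h1
  refine ⟨⟨_, hgmem⟩, Subtype.ext ?_⟩
  rw [MulMemClass.coe_mul, tp_coe]
  ext N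
  rw [PowerSeries.coeff_X_pow_mul']
  by_cases hN : a * ℓ ≤ N
  · rw [if_pos hN, PowerSeries.coeff_mk, Nat.sub_add_cancel hN]
  · rw [if_neg hN]
    exact hf N (by omega)

lemma colon_le (k : Type) [Field k] (a : ℕ) (ha : 2 ≤ a) (H : AddSubmonoid ℕ)
    (hH : H = AddSubmonoid.closure {a, a + 1})
    (haH : a ∈ H) (ha1H : a + 1 ∈ H)
    (ℓ : ℕ) (hℓ : ℓ < a - 1) (hsmem : a * ℓ ∈ H)
    (𝔪 : Ideal (ssr k H)) (h𝔪 : 𝔪 = Ideal.span {tp k H a haH, tp k H (a + 1) ha1H})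
    (Q : Ideal (ssr k H)) (hQ : Q = Ideal.span {tp k H (a * ℓ) hsmem})
    (I : Ideal (ssr k H)) (hI : I = Submodule.colon Q ((𝔪 ^ (a - 1) : Ideal (ssr k H)) : Set (ssr k H))) :
    I ≤ jdl k H (a * ℓ) := by
  intro f hfI
  rw [mem_jdl]
  intro n hn
  by_cases hnH : n ∈ H
  swap
  · exact f.2 n hnH
  by_contra hne
  have hra : n % a < a := Nat.mod_lt _ (by omega)
  have hrq : n % a ≤ n / a := (memH_iff (by omega) n).1 (hH ▸ hnH)
  have hdm := Nat.div_add_mod n a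
  have hqℓ : n / a < ℓ := by
    by_contra hcon
    have : a * ℓ ≤ a * (n / a) := Nat.mul_le_mul_left a (by omega)
    omega
  set c := a - 1 - n % a with hc
  have hcle : c ≤ a - 1 := by omega
  have hmm : a * (a - 1) + c ∈ H := aec_mem a H hH (a - 1) c hcle
  have htp : tp k H (a * (a - 1) + c) hmm ∈ 𝔪 ^ (a - 1) :=
    tp_mem_pow k a H hH haH ha1H 𝔪 h𝔪 (a - 1) c hcle hmm
  have hfQ : f * tp k H (a * (a - 1) + c) hmm ∈ Q := by
    rw [hI] at hfI
    have := Submodule.mem_colon.1 hfI _ htp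
    rwa [smul_eq_mul] at this
  rw [hQ, Ideal.mem_span_singleton] at hfQ
  obtain ⟨g, hg⟩ := hfQ
  have hval := congrArg (fun x : ssr k H =>
    PowerSeries.coeff (R := k) (n + (a * (a - 1) + c)) (x : PowerSeries k)) hg
  simp only [MulMemClass.coe_mul] at hval
  rw [tp_coe, tp_coe, PowerSeries.coeff_mul_X_pow, PowerSeries.coeff_X_pow_mul'] at hval
  have hℓa : a * ℓ ≤ a * (a - 1) := Nat.mul_le_mul_left a (by omega)
  rw [if_pos (by omega)] at hval
  have hnot : n + (a * (a - 1) + c) - a * ℓ ∉ H := by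
    obtain ⟨d, hd⟩ : ∃ d, a - 1 = ℓ + d := ⟨a - 1 - ℓ, by omega⟩
    have e2 : a * (a - 1) = a * ℓ + a * d := by rw [hd]; ring
    have e3 : a * (n / a + d) = a * (n / a) + a * d := by ring
    have e4 : n + (a * (a - 1) + c) - a * ℓ = a * (n / a + d) + (a - 1) := by omega
    rw [e4, hH, memH_iff (show 1 ≤ a by omega)]
    have hp := div_mod_pair (show 0 < a by omega) (show a - 1 < a by omega)
      (rfl : a * (n / a + d) + (a - 1) = a * (n / a + d) + (a - 1))
    omega
  rw [ssr_coeff_eq_zero k H g hnot] at hval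
  exact hne hval

end Helpers

/-- Corollary 3.6 (1): for `q = a-1` and `s = aℓ` (`1 ≤ ℓ < a-1`), `I = 𝔪^ℓ` and
`G(I)` is Cohen-Macaulay, i.e. `Q ∩ I^{n+1} = QI^n` for all `n`. -/
theorem stmt15 (k : Type) [Field k] (a : ℕ) (ha : 2 ≤ a)
    (H : AddSubmonoid ℕ) (hH : H = AddSubmonoid.closure {a, a + 1})
    (haH : a ∈ H) (ha1H : a + 1 ∈ H)
    (ℓ : ℕ) (hℓ1 : 1 ≤ ℓ) (hℓ : ℓ < a - 1)
    (s : ℕ) (hsval : s = a * ℓ) (hs : s ∈ H)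
    (𝔪 : Ideal (ssr k H)) (h𝔪 : 𝔪 = Ideal.span {tp k H a haH, tp k H (a + 1) ha1H})
    (Q : Ideal (ssr k H)) (hQ : Q = Ideal.span {tp k H s hs})
    (I : Ideal (ssr k H)) (hI : I = Submodule.colon Q ((𝔪 ^ (a - 1) : Ideal (ssr k H)) : Set (ssr k H))) :
    I = 𝔪 ^ ℓ ∧ ∀ n : ℕ, Q ⊓ I ^ (n + 1) = Q * I ^ n := by
  subst hsval
  have hQle : Q ≤ 𝔪 ^ ℓ := by
    rw [hQ, Ideal.span_le]
    intro x hx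
    rw [Set.mem_singleton_iff] at hx
    subst hx
    rw [SetLike.mem_coe,
      tp_congr k H hs (aec_mem a H hH ℓ 0 (by omega)) (by omega)]
    exact tp_mem_pow k a H hH haH ha1H 𝔪 h𝔪 ℓ 0 (by omega) _
  have hIm : I = 𝔪 ^ ℓ := by
    apply le_antisymm
    · exact le_trans (colon_le k a ha H hH haH ha1H ℓ hℓ hs 𝔪 h𝔪 Q hQ I hI)
        (jdl_le_pow k a ha H hH haH ha1H 𝔪 h𝔪 ℓ)
    · rw [hI]
      intro f hf
      rw [Submodule.mem_colon]
      intro p hp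
      rw [smul_eq_mul]
      apply jdl_le_Q k a ha H hH ℓ hs Q hQ
      have h1 : f * p ∈ 𝔪 ^ (ℓ + (a - 1)) := by
        rw [pow_add]; exact Ideal.mul_mem_mul hf hp
      have h2 := pow_m_le k a H haH ha1H 𝔪 h𝔪 (ℓ + (a - 1)) h1
      have h3 : a * (ℓ + (a - 1)) = a * ℓ + a * (a - 1) := by ring
      rwa [h3] at h2
  refine ⟨hIm, fun n => ?_⟩
  rw [hIm]
  apply le_antisymm
  · intro f hf
    rw [Submodule.mem_inf] at hf
    obtain ⟨hfQ, hfP⟩ := hf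
    rw [hQ, Ideal.mem_span_singleton] at hfQ
    obtain ⟨g, hg⟩ := hfQ
    have hgj : g ∈ jdl k H (a * (ℓ * n)) := by
      rw [mem_jdl]
      intro m hm
      have hcoeff : PowerSeries.coeff (R := k) (m + a * ℓ) (f : PowerSeries k)
          = PowerSeries.coeff (R := k) m (g : PowerSeries k) := by
        rw [hg, MulMemClass.coe_mul, tp_coe]
        exact PowerSeries.coeff_X_pow_mul (g : PowerSeries k) (a * ℓ) m
      have hfj : f ∈ jdl k H (a * (ℓ * (n + 1))) := by
        apply pow_m_le k a H haH ha1H 𝔪 h𝔪 (ℓ * (n + 1))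
        rw [pow_mul]
        exact hfP
      rw [mem_jdl] at hfj
      have harith : a * (ℓ * (n + 1)) = a * (ℓ * n) + a * ℓ := by ring
      rw [← hcoeff]
      exact hfj _ (by omega)
    have hgP : g ∈ (𝔪 ^ ℓ) ^ n := by
      rw [← pow_mul]
      exact jdl_le_pow k a ha H hH haH ha1H 𝔪 h𝔪 (ℓ * n) hgj
    rw [hg]
    exact Ideal.mul_mem_mul (by rw [hQ]; exact Ideal.subset_span rfl) hgP
  · apply le_inf
    · exact Ideal.mul_le_left
    · rw [pow_succ']
      exact Ideal.mul_mono hQle le_rfl
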